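/- Let k ≥ 1 be an integer, δ > 0, and let P be a Borel probability measure on ℝ with ∫|x|^{2k+δ} dP(x) ≤ M < ∞. Then for all 0 ≤ s ≤ t, ∫ ((x−s)_+^k − (x−t)_+^k)^2 dP(x) ≤ k^2 (t−s)^2 M^{(2k−2)/(2k+δ)}. -/

import Mathlib

open MeasureTheory Filter Set
open scoped ENNReal NNReal

lemma aux_pow_sub (k : ℕ) {a b : ℝ} (hb : 0 ≤ b) (hba : b ≤ a) :
    a ^ k - b ^ k ≤ k * (a - b) * a ^ (k - 1) := by
  have ha : 0 ≤ a := hb.trans hba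
  rw [← geom_sum₂_mul]
  have hsum : (∑ i ∈ Finset.range k, a ^ i * b ^ (k - 1 - i)) ≤ k * a ^ (k - 1) := by
    calc (∑ i ∈ Finset.range k, a ^ i * b ^ (k - 1 - i))
        ≤ ∑ i ∈ Finset.range k, a ^ (k - 1) := by
          apply Finset.sum_le_sum
          intro i hi
          have hik : i ≤ k - 1 := by
            have := Finset.mem_range.mp hi; omega
          calc a ^ i * b ^ (k - 1 - i) ≤ a ^ i * a ^ (k - 1 - i) := by
                apply mul_le_mul_of_nonneg_left (pow_le_pow_left₀ hb hba _) (pow_nonneg ha _)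
            _ = a ^ (k - 1) := by rw [← pow_add]; congr 1; omega
      _ = k * a ^ (k - 1) := by
          rw [Finset.sum_const, Finset.card_range, nsmul_eq_mul]
  calc (∑ i ∈ Finset.range k, a ^ i * b ^ (k - 1 - i)) * (a - b)
      ≤ (k * a ^ (k - 1)) * (a - b) :=
        mul_le_mul_of_nonneg_right hsum (by linarith)
    _ = k * (a - b) * a ^ (k - 1) := by ring

lemma jensen_rpow (P : Measure ℝ) [IsProbabilityMeasure P] {p q : ℝ}
    (hp : 0 ≤ p) (hpq : p ≤ q)
    (hint : Integrable (fun x : ℝ => |x| ^ q) P) :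
    (∫ x, |x| ^ p ∂P) ≤ (∫ x, |x| ^ q ∂P) ^ (p / q) := by
  rcases eq_or_lt_of_le hp with hp0 | hp0
  · simp [← hp0, Real.rpow_zero, zero_div]
  · have hq0 : 0 < q := lt_of_lt_of_le hp0 hpq
    have hpq0 : 0 ≤ p / q := div_nonneg hp hq0.le
    set A := ∫⁻ (x : ℝ), (‖x‖₊ : ℝ≥0∞) ^ p ∂P with hA
    set B := ∫⁻ (x : ℝ), (‖x‖₊ : ℝ≥0∞) ^ q ∂P with hB
    have hmp : Measurable fun x : ℝ => |x| ^ p := by measurability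
    have hmq : Measurable fun x : ℝ => |x| ^ q := by measurability
    have hAeq : ∀ r : ℝ, 0 ≤ r → (∫⁻ (x : ℝ), (‖x‖₊ : ℝ≥0∞) ^ r ∂P)
        = ∫⁻ (x : ℝ), ENNReal.ofReal (|x| ^ r) ∂P := by
      intro r hr
      refine lintegral_congr fun x => ?_
      rw [show ((‖x‖₊ : ℝ≥0∞)) = ENNReal.ofReal |x| from Real.enorm_eq_ofReal_abs x, ENNReal.ofReal_rpow_of_nonneg (abs_nonneg x) hr]
    have hBne : B ≠ ⊤ := by
      rw [hB, hAeq q hq0.le]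
      have h := hint.hasFiniteIntegral
      rw [HasFiniteIntegral] at h
      refine ne_of_lt (lt_of_le_of_lt (le_of_eq ?_) h)
      refine lintegral_congr fun x => ?_
      rw [Real.enorm_eq_ofReal (by positivity)]
    have hABle : A ≤ B ^ (p / q) := by
      have h := eLpNorm'_le_eLpNorm'_of_exponent_le (f := fun x : ℝ => x) hp0 hpq P
        measurable_id.aestronglyMeasurable
      simp only [eLpNorm'] at h
      calc A = (A ^ (1 / p)) ^ p := by
              rw [← ENNReal.rpow_mul, one_div, inv_mul_cancel₀ hp0.ne', ENNReal.rpow_one]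
        _ ≤ (B ^ (1 / q)) ^ p := ENNReal.rpow_le_rpow h hp0.le
        _ = B ^ (p / q) := by
              rw [← ENNReal.rpow_mul, one_div, div_eq_mul_inv, mul_comm]
    rw [integral_eq_lintegral_of_nonneg_ae (ae_of_all _ fun x => by positivity)
        hmp.aestronglyMeasurable,
      integral_eq_lintegral_of_nonneg_ae (ae_of_all _ fun x => by positivity)
        hmq.aestronglyMeasurable,
      ← hAeq p hp, ← hAeq q hq0.le, ENNReal.toReal_rpow]
    exact ENNReal.toReal_mono (ENNReal.rpow_ne_top_of_nonneg hpq0 hBne) hABle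

theorem stmt6 (k : ℕ) (hk : 1 ≤ k) (δ : ℝ) (hδ : 0 < δ) (M : ℝ)
    (P : Measure ℝ) [IsProbabilityMeasure P]
    (hint : Integrable (fun x : ℝ => |x| ^ ((2 * k : ℝ) + δ)) P)
    (hM : (∫ x, |x| ^ ((2 * k : ℝ) + δ) ∂P) ≤ M)
    (s t : ℝ) (hs : 0 ≤ s) (hst : s ≤ t) :
    (∫ x, (max (x - s) 0 ^ k - max (x - t) 0 ^ k) ^ 2 ∂P)
      ≤ (k : ℝ) ^ 2 * (t - s) ^ 2 * M ^ (((2 * k : ℝ) - 2) / ((2 * k : ℝ) + δ)) := by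
  have hk1 : (1 : ℝ) ≤ (k : ℝ) := by exact_mod_cast hk
  set p : ℝ := (2 * k : ℝ) - 2 with hpdef
  set q : ℝ := (2 * k : ℝ) + δ with hqdef
  have hp : 0 ≤ p := by rw [hpdef]; linarith
  have hq : 0 < q := by rw [hqdef]; linarith
  have hpq : p ≤ q := by rw [hpdef, hqdef]; linarith
  have hpt : ∀ x : ℝ, (max (x - s) 0 ^ k - max (x - t) 0 ^ k) ^ 2
      ≤ (k : ℝ) ^ 2 * (t - s) ^ 2 * |x| ^ p := by
    intro x
    set a := max (x - s) 0 with hadef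
    set b := max (x - t) 0 with hbdef
    have ha0 : 0 ≤ a := le_max_right _ _
    have hb0 : 0 ≤ b := le_max_right _ _
    have hba : b ≤ a := max_le_max (by linarith) le_rfl
    have haabs : a ≤ |x| := max_le (by linarith [le_abs_self x]) (abs_nonneg x)
    have hdiff : a - b ≤ t - s := by
      have hxb : x - t ≤ b := le_max_left _ _
      have : a ≤ b + (t - s) := max_le (by linarith) (by linarith)
      linarith
    have hts : (0 : ℝ) ≤ t - s := by linarith
    have h1 : 0 ≤ a ^ k - b ^ k := sub_nonneg.2 (pow_le_pow_left₀ hb0 hba k)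
    have h2 : a ^ k - b ^ k ≤ (k : ℝ) * (t - s) * |x| ^ (k - 1) := by
      calc a ^ k - b ^ k ≤ k * (a - b) * a ^ (k - 1) := aux_pow_sub k hb0 hba
        _ ≤ (k : ℝ) * (t - s) * |x| ^ (k - 1) := by
            apply mul_le_mul (mul_le_mul_of_nonneg_left hdiff (Nat.cast_nonneg k))
              (pow_le_pow_left₀ ha0 haabs _) (pow_nonneg ha0 _)
              (mul_nonneg (Nat.cast_nonneg k) hts)
    calc (a ^ k - b ^ k) ^ 2 ≤ ((k : ℝ) * (t - s) * |x| ^ (k - 1)) ^ 2 :=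
          pow_le_pow_left₀ h1 h2 2
      _ = (k : ℝ) ^ 2 * (t - s) ^ 2 * |x| ^ p := by
          rw [mul_pow, mul_pow, ← pow_mul]
          congr 1
          rw [← Real.rpow_natCast |x| ((k - 1) * 2)]
          congr 1
          push_cast [Nat.cast_sub hk]
          rw [hpdef]; ring
  have hdom : Integrable (fun x : ℝ => |x| ^ p) P := by
    have hI : Integrable (fun x : ℝ => 1 + |x| ^ q) P := (integrable_const 1).add hint
    refine hI.mono' (Measurable.aestronglyMeasurable (by measurability))
      (ae_of_all _ fun x => ?_)
    rw [Real.norm_eq_abs, abs_of_nonneg (by positivity)]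
    rcases le_total |x| 1 with h | h
    · have h1 : |x| ^ p ≤ 1 := Real.rpow_le_one (abs_nonneg x) h hp
      have h2 : (0 : ℝ) ≤ |x| ^ q := by positivity
      linarith
    · have h1 : |x| ^ p ≤ |x| ^ q := Real.rpow_le_rpow_of_exponent_le h hpq
      linarith
  have hCnn : (0 : ℝ) ≤ (k : ℝ) ^ 2 * (t - s) ^ 2 := by positivity
  have hg_int : Integrable (fun x : ℝ => (max (x - s) 0 ^ k - max (x - t) 0 ^ k) ^ 2) P := by
    refine (hdom.const_mul ((k : ℝ) ^ 2 * (t - s) ^ 2)).mono'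
      (Continuous.aestronglyMeasurable (by continuity)) (ae_of_all _ fun x => ?_)
    rw [Real.norm_eq_abs, abs_of_nonneg (sq_nonneg _)]
    exact hpt x
  calc (∫ x, (max (x - s) 0 ^ k - max (x - t) 0 ^ k) ^ 2 ∂P)
      ≤ ∫ x, (k : ℝ) ^ 2 * (t - s) ^ 2 * |x| ^ p ∂P :=
        integral_mono hg_int (hdom.const_mul _) fun x => hpt x
    _ = (k : ℝ) ^ 2 * (t - s) ^ 2 * ∫ x, |x| ^ p ∂P := by
        rw [integral_const_mul]
    _ ≤ (k : ℝ) ^ 2 * (t - s) ^ 2 * (∫ x, |x| ^ q ∂P) ^ (p / q) :=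
        mul_le_mul_of_nonneg_left (jensen_rpow P hp hpq hint) hCnn
    _ ≤ (k : ℝ) ^ 2 * (t - s) ^ 2 * M ^ (p / q) :=
        mul_le_mul_of_nonneg_left
          (Real.rpow_le_rpow (integral_nonneg fun x => by positivity) hM
            (div_nonneg hp hq.le)) hCnn
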